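/- Let n ∈ ℕ with n ≥ 2 and 1 ≤ k ≤ n. Then there exists p* ∈ [(k-1)/(n-1), 1] such that ψ_{n,k} is strictly increasing on [0, p*] and strictly decreasing on [p*, 1]; in particular ψ_{n,k} attains its maximum over [0,1] at the unique point p*. -/

import Mathlib

open MeasureTheory

/-- Binomial upper tail `B_{n,p}({k,…,n})`. -/
noncomputable def binTail (n k : ℕ) (p : ℝ) : ℝ :=
  ∑ j ∈ Finset.Icc k n, (n.choose j : ℝ) * p ^ j * (1 - p) ^ (n - j)

/-- `ψ_{n,k}(p) = p⁻¹ B_{n,p}({k,…,n})`, extended continuously at `0`. -/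
noncomputable def psi (n k : ℕ) (p : ℝ) : ℝ :=
  if p = 0 then (if k = 1 then (n : ℝ) else 0) else p⁻¹ * binTail n k p

/-- `c_{n,k} = sup_{p ∈ [0,1]} ψ_{n,k}(p)`. -/
noncomputable def cnk (n k : ℕ) : ℝ := sSup (psi n k '' Set.Icc 0 1)

/-- `f_{n,k}(u) = u ⋅ sup_{p ∈ [u,1]} ψ_{n,k}(p)`. -/
noncomputable def fnk (n k : ℕ) (u : ℝ) : ℝ := u * sSup (psi n k '' Set.Icc u 1)


lemma binTail_eval (n k : ℕ) (p : ℝ) :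
    (∑ j ∈ Finset.Icc k n, bernsteinPolynomial ℝ n j).eval p = binTail n k p := by
  simp [binTail, bernsteinPolynomial, Polynomial.eval_finset_sum]

lemma deriv_sum_bernstein (n k : ℕ) (hk : 1 ≤ k) (hkn : k ≤ n) :
    Polynomial.derivative (∑ j ∈ Finset.Icc k n, bernsteinPolynomial ℝ n j)
      = (n : ℝ) • bernsteinPolynomial ℝ (n - 1) (k - 1) := by
  have hIcc : Finset.Icc k n = Finset.image (· + 1) (Finset.Icc (k-1) (n-1)) := by
    ext j
    simp only [Finset.mem_Icc, Finset.mem_image]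
    constructor
    · intro ⟨h1, h2⟩; exact ⟨j - 1, ⟨by omega, by omega⟩, by omega⟩
    · rintro ⟨m, ⟨h1, h2⟩, rfl⟩; omega
  rw [map_sum, hIcc, Finset.sum_image (by intro a _ b _ h; beta_reduce at h; omega)]
  have : ∀ m ∈ Finset.Icc (k-1) (n-1), Polynomial.derivative (bernsteinPolynomial ℝ n (m+1))
      = (n:ℝ) • (bernsteinPolynomial ℝ (n-1) m - bernsteinPolynomial ℝ (n-1) (m+1)) := by
    intro m _
    rw [bernsteinPolynomial.derivative_succ]
    simp [Polynomial.smul_eq_C_mul]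
  rw [Finset.sum_congr rfl this, ← Finset.smul_sum]
  congr 1
  have h1 : Finset.Icc (k-1) (n-1) = Finset.Ico (k-1) n := by
    ext j; simp only [Finset.mem_Icc, Finset.mem_Ico]; omega
  rw [h1, Finset.sum_Ico_eq_sum_range]
  have := Finset.sum_range_sub' (fun i => bernsteinPolynomial ℝ (n-1) (k-1+i)) (n - (k-1))
  simp only [add_zero, ← add_assoc] at this
  rw [this]
  have hz : bernsteinPolynomial ℝ (n-1) (k-1+(n-(k-1))) = 0 :=
    bernsteinPolynomial.eq_zero_of_lt ℝ (by omega)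
  rw [hz, sub_zero]


lemma hasDerivAt_binTail (n k : ℕ) (hk : 1 ≤ k) (hkn : k ≤ n) (p : ℝ) :
    HasDerivAt (binTail n k)
      ((n : ℝ) * ((n-1).choose (k-1) : ℝ) * p ^ (k-1) * (1-p) ^ (n-k)) p := by
  have h := Polynomial.hasDerivAt (∑ j ∈ Finset.Icc k n, bernsteinPolynomial ℝ n j) p
  have hfun : (fun x => Polynomial.eval x (∑ j ∈ Finset.Icc k n, bernsteinPolynomial ℝ n j))
      = binTail n k := funext fun x => binTail_eval n k x
  rw [hfun, deriv_sum_bernstein n k hk hkn] at h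
  have hnk : n - 1 - (k - 1) = n - k := by omega
  simpa [bernsteinPolynomial, hnk, mul_assoc] using h

lemma binTail_zero (n k : ℕ) (hk : 1 ≤ k) : binTail n k 0 = 0 := by
  apply Finset.sum_eq_zero
  intro j hj
  have : j ≠ 0 := by simp only [Finset.mem_Icc] at hj; omega
  simp [zero_pow this]

lemma binTail_one (n k : ℕ) (hkn : k ≤ n) : binTail n k 1 = 1 := by
  rw [binTail, Finset.sum_eq_single n]
  · simp
  · intro j hj hne
    simp only [Finset.mem_Icc] at hj
    have : n - j ≠ 0 := by omega
    simp [zero_pow this]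
  · intro h; exact absurd (Finset.mem_Icc.mpr ⟨hkn, le_rfl⟩) h

lemma binTail_pos (n k : ℕ) (hkn : k ≤ n) {p : ℝ} (hp : 0 < p) (hp1 : p ≤ 1) :
    0 < binTail n k p := by
  apply Finset.sum_pos'
  · intro j hj
    have h1 : (0:ℝ) ≤ 1 - p := by linarith
    positivity
  · refine ⟨n, Finset.mem_Icc.mpr ⟨hkn, le_rfl⟩, ?_⟩
    simp only [Nat.choose_self, Nat.cast_one, one_mul, Nat.sub_self, pow_zero, mul_one]
    positivity

lemma binTail_cont (n k : ℕ) : Continuous (binTail n k) := by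
  unfold binTail; fun_prop

lemma binTail_k_zero (n : ℕ) (p : ℝ) : binTail n 0 p = 1 := by
  rw [binTail, ← Finset.Ico_add_one_right_eq_Icc, ← Finset.range_eq_Ico]
  have h := add_pow p (1-p) n
  simp only [add_sub_cancel, one_pow] at h
  conv_rhs => rw [h]
  apply Finset.sum_congr rfl
  intro j _; ring

lemma binTail_k_one (n : ℕ) (p : ℝ) : binTail n 1 p = 1 - (1-p)^n := by
  have h0 : (0:ℕ) ∉ Finset.Icc 1 n := by simp
  have : binTail n 0 p = (n.choose 0 : ℝ) * p ^ 0 * (1-p)^(n-0) + binTail n 1 p := by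
    rw [binTail, binTail, show Finset.Icc 0 n = insert 0 (Finset.Icc 1 n) by
      ext j; simp [Finset.mem_Icc, Finset.mem_insert]; omega,
      Finset.sum_insert h0]
  rw [binTail_k_zero] at this
  simp at this
  linarith

lemma geom_identity (n : ℕ) (p : ℝ) :
    p * ∑ i ∈ Finset.range n, (1-p)^i = 1 - (1-p)^n := by
  have h := geom_sum_mul (1-p) n
  linear_combination (-1 : ℝ) * h


lemma alg_aux (c p : ℝ) (a m : ℕ) :
    c * p^a * (1-p)^(m+1) + p * (c * ((a:ℝ) * p^(a-1) * (1-p)^(m+1)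
      + p^a * (-(((m:ℝ)+1) * (1-p)^m)))) - c * p^a * (1-p)^(m+1)
    = c * p^a * (1-p)^m * ((a:ℝ) - ((a:ℝ)+(m:ℝ)+1) * p) := by
  rcases a with _ | b
  · push_cast; ring
  · have : (b+1) - 1 = b := rfl
    rw [this]
    push_cast
    ring


/-- Auxiliary function `D(p) = p·B'(p) − B(p)`. -/
noncomputable def Dfun (n k : ℕ) (p : ℝ) : ℝ :=
  p * ((n : ℝ) * ((n-1).choose (k-1) : ℝ) * p ^ (k-1) * (1-p) ^ (n-k)) - binTail n k p

lemma hasDerivAt_Dfun (n k : ℕ) (hk : 1 ≤ k) (hkn : k < n) (p : ℝ) :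
    HasDerivAt (Dfun n k)
      ((n : ℝ) * ((n-1).choose (k-1) : ℝ) * p ^ (k-1) * (1-p) ^ (n-k-1) *
        (((k:ℝ) - 1) - ((n:ℝ) - 1) * p)) p := by
  set c : ℝ := (n : ℝ) * ((n-1).choose (k-1) : ℝ) with hc
  have h1 : HasDerivAt (fun p : ℝ => p ^ (k-1)) (((k:ℕ)-1 : ℕ) * p ^ (k-1-1)) p :=
    hasDerivAt_pow (k-1) p
  have h2 : HasDerivAt (fun p : ℝ => (1-p) ^ (n-k)) (-(((n:ℕ)-k : ℕ) * (1-p) ^ (n-k-1))) p := by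
    have := (hasDerivAt_pow (n-k) (1-p)).comp p ((hasDerivAt_const p (1:ℝ)).sub (hasDerivAt_id p))
    simpa [Function.comp_def] using this
  have hg : HasDerivAt (fun p : ℝ => c * p ^ (k-1) * (1-p) ^ (n-k))
      (c * ((((k:ℕ)-1 : ℕ) * p ^ (k-1-1)) * (1-p) ^ (n-k)
        + p ^ (k-1) * (-(((n:ℕ)-k : ℕ) * (1-p) ^ (n-k-1))))) p := by
    have := ((h1.mul h2).const_mul c)
    simpa [mul_add, mul_assoc] using this
  have hpg : HasDerivAt (fun p : ℝ => p * (c * p ^ (k-1) * (1-p) ^ (n-k)))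
      (c * p ^ (k-1) * (1-p) ^ (n-k)
        + p * (c * ((((k:ℕ)-1 : ℕ) * p ^ (k-1-1)) * (1-p) ^ (n-k)
        + p ^ (k-1) * (-(((n:ℕ)-k : ℕ) * (1-p) ^ (n-k-1)))))) p := by
    simpa [Pi.mul_def] using (hasDerivAt_id p).mul hg
  have hD := hpg.sub (hasDerivAt_binTail n k hk (le_of_lt hkn) p)
  obtain ⟨m, hm⟩ : ∃ m, n - k = m + 1 := ⟨n - k - 1, by omega⟩
  set a := k - 1 with ha
  have hm1 : n - k - 1 = m := by omega
  have hcm : (((n:ℕ)-k : ℕ) : ℝ) = (m:ℝ) + 1 := by rw [hm]; push_cast; ring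
  have hkc : ((k:ℝ) - 1) = (a:ℝ) := by
    rw [ha]; push_cast [Nat.cast_sub hk]; ring
  have hnc : ((n:ℝ) - 1) = (a:ℝ) + (m:ℝ) + 1 := by
    have : n = a + m + 2 := by omega
    rw [this]; push_cast; ring
  have heq : c * p ^ (k-1) * (1-p) ^ (n-k)
        + p * (c * ((((k:ℕ)-1 : ℕ) * p ^ (k-1-1)) * (1-p) ^ (n-k)
        + p ^ (k-1) * (-(((n:ℕ)-k : ℕ) * (1-p) ^ (n-k-1)))))
        - c * p ^ (k-1) * (1-p) ^ (n-k)
      = c * p ^ (k-1) * (1-p) ^ (n-k-1) * (((k:ℝ) - 1) - ((n:ℝ) - 1) * p) := by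
    rw [hm]
    simp only [Nat.add_sub_cancel]
    rw [hkc, hnc, (by push_cast; ring : ((m+1:ℕ):ℝ) = (m:ℝ)+1)]
    exact alg_aux c p (k-1) m
  rw [heq] at hD
  exact hD


lemma psi_eq (n k : ℕ) {p : ℝ} (hp : p ≠ 0) : psi n k p = p⁻¹ * binTail n k p := if_neg hp

lemma hasDerivAt_psi (n k : ℕ) (hk : 1 ≤ k) (hkn : k ≤ n) {p : ℝ} (hp : p ≠ 0) :
    HasDerivAt (psi n k) ((p^2)⁻¹ * Dfun n k p) p := by
  have hB := hasDerivAt_binTail n k hk hkn p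
  have h := (hasDerivAt_inv hp).mul hB
  have heq : -(p ^ 2)⁻¹ * binTail n k p +
      p⁻¹ * ((n : ℝ) * ((n-1).choose (k-1) : ℝ) * p ^ (k-1) * (1-p) ^ (n-k))
      = (p^2)⁻¹ * Dfun n k p := by
    rw [Dfun]
    field_simp
    ring
  rw [heq] at h
  apply h.congr_of_eventuallyEq
  filter_upwards [IsOpen.mem_nhds isOpen_compl_singleton hp] with q hq
  exact psi_eq n k hq


/-- For `n ≥ 2` there is `p* ∈ [(k-1)/(n-1), 1]` such that `ψ_{n,k}` is strictly increasing
on `[0,p*]` and strictly decreasing on `[p*,1]`; in particular `ψ_{n,k}` attains its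
maximum over `[0,1]` exactly at `p*`. -/
theorem psi_unimodal (n k : ℕ) (hn : 2 ≤ n) (hk1 : 1 ≤ k) (hkn : k ≤ n) :
    ∃ pstar ∈ Set.Icc (((k:ℝ) - 1) / ((n:ℝ) - 1)) 1,
      StrictMonoOn (psi n k) (Set.Icc 0 pstar) ∧
      StrictAntiOn (psi n k) (Set.Icc pstar 1) ∧
      (∀ p ∈ Set.Icc (0:ℝ) 1, psi n k p ≤ psi n k pstar) ∧
      (∀ p ∈ Set.Icc (0:ℝ) 1, p ≠ pstar → psi n k p < psi n k pstar) := by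
  have hn1R : (0:ℝ) < (n:ℝ) - 1 := by
    have : (2:ℝ) ≤ (n:ℝ) := by exact_mod_cast hn
    linarith
  by_cases hkeq : k = n
  · -- k = n : psi is p ^ (n-1)
    subst hkeq
    have hpsi : ∀ p : ℝ, psi k k p = p ^ (k-1) := by
      intro p
      by_cases hp : p = 0
      · subst hp
        simp [psi, show k ≠ 1 by omega, zero_pow (show k - 1 ≠ 0 by omega)]
      · rw [psi_eq _ _ hp]
        have hb : binTail k k p = p ^ k := by
          rw [binTail, Finset.Icc_self, Finset.sum_singleton]
          simp
        rw [hb, show p ^ k = p ^ (k-1) * p by rw [← pow_succ]; congr 1; omega,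
          mul_comm (p^(k-1)) p, ← mul_assoc, inv_mul_cancel₀ hp, one_mul]
    have hanti : StrictAntiOn (psi k k) (Set.Icc (1:ℝ) 1) := by
      intro x hx y hy hxy
      have hx1 : x = 1 := le_antisymm hx.2 hx.1
      have hy1 : y = 1 := le_antisymm hy.2 hy.1
      rw [hx1, hy1] at hxy; exact absurd hxy (lt_irrefl 1)
    have hlt : ∀ p ∈ Set.Icc (0:ℝ) 1, p ≠ 1 → psi k k p < psi k k 1 := by
      intro p hp hne
      rw [hpsi, hpsi, one_pow]
      exact pow_lt_one₀ hp.1 (lt_of_le_of_ne hp.2 hne) (by omega)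
    refine ⟨1, ⟨le_of_eq (div_self (ne_of_gt hn1R)), le_rfl⟩, ?_, hanti, ?_, hlt⟩
    · intro x hx y hy hxy
      rw [hpsi, hpsi]
      exact pow_lt_pow_left₀ hxy hx.1 (by omega)
    · intro p hp
      rcases eq_or_ne p 1 with h | h
      · rw [h]
      · exact le_of_lt (hlt p hp h)
  · have hklt : k < n := lt_of_le_of_ne hkn hkeq
    set c : ℝ := (n : ℝ) * ((n-1).choose (k-1) : ℝ) with hc
    have hcpos : 0 < c := by
      apply mul_pos
      · exact_mod_cast Nat.cast_pos.mpr (show 0 < n by omega)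
      · exact_mod_cast Nat.choose_pos (show k-1 ≤ n-1 by omega)
    have hDd : ∀ p : ℝ, HasDerivAt (Dfun n k)
        (c * p^(k-1) * (1-p)^(n-k-1) * (((k:ℝ)-1) - ((n:ℝ)-1)*p)) p :=
      fun p => hasDerivAt_Dfun n k hk1 hklt p
    have hDcont : Continuous (Dfun n k) := by
      rw [continuous_iff_continuousAt]; exact fun p => (hDd p).continuousAt
    have hD0 : Dfun n k 0 = 0 := by simp [Dfun, binTail_zero n k hk1]
    have hD1 : Dfun n k 1 = -1 := by
      simp [Dfun, binTail_one n k hkn, zero_pow (show n - k ≠ 0 by omega)]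
    set ρ : ℝ := ((k:ℝ)-1)/((n:ℝ)-1) with hρ
    have hkR : (1:ℝ) ≤ (k:ℝ) := by exact_mod_cast hk1
    have hρ0 : 0 ≤ ρ := div_nonneg (by linarith) (le_of_lt hn1R)
    have hρ1 : ρ < 1 := by
      rw [hρ, div_lt_one hn1R]
      have : (k:ℝ) < n := by exact_mod_cast hklt
      linarith
    have hderivD : ∀ p : ℝ, deriv (Dfun n k) p
        = c * p^(k-1) * (1-p)^(n-k-1) * (((k:ℝ)-1) - ((n:ℝ)-1)*p) := fun p => (hDd p).deriv
    have SAD : StrictAntiOn (Dfun n k) (Set.Icc ρ 1) := by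
      apply strictAntiOn_of_deriv_neg (convex_Icc ρ 1) hDcont.continuousOn
      intro x hx
      rw [interior_Icc] at hx
      rw [hderivD]
      have hx0 : 0 < x := lt_of_le_of_lt hρ0 hx.1
      have hx1 : x < 1 := hx.2
      apply mul_neg_of_pos_of_neg
      · exact mul_pos (mul_pos hcpos (pow_pos hx0 _)) (pow_pos (by linarith) _)
      · rw [sub_neg]
        have := (div_lt_iff₀ hn1R).mp hx.1
        linarith
    have hpsid : ∀ p : ℝ, p ≠ 0 → HasDerivAt (psi n k) ((p^2)⁻¹ * Dfun n k p) p :=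
      fun p hp => hasDerivAt_psi n k hk1 hkn hp
    by_cases hk2 : k = 1
    · -- k = 1 : pstar = 0
      subst hk2
      have hρeq : ρ = 0 := by rw [hρ]; norm_num
      have SAD01 : StrictAntiOn (Dfun n 1) (Set.Icc 0 1) := hρeq ▸ SAD
      have Dneg : ∀ y : ℝ, 0 < y → y ≤ 1 → Dfun n 1 y < 0 := by
        intro y hy hy1
        have := SAD01 ⟨le_rfl, zero_le_one⟩ ⟨le_of_lt hy, hy1⟩ hy
        rwa [hD0] at this
      have SA : StrictAntiOn (psi n 1) (Set.Icc 0 1) := by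
        intro x hx y hy hxy
        rcases eq_or_lt_of_le hx.1 with hx0 | hx0
        · rw [← hx0]
          have hy0 : 0 < y := by rw [hx0]; exact hxy
          have hpsi0 : psi n 1 0 = n := by simp [psi]
          have hpsiy : psi n 1 y = ∑ i ∈ Finset.range n, (1-y)^i := by
            rw [psi_eq _ _ (ne_of_gt hy0), binTail_k_one, ← geom_identity n y, ← mul_assoc,
              inv_mul_cancel₀ (ne_of_gt hy0), one_mul]
          rw [hpsi0, hpsiy]
          have : ∑ i ∈ Finset.range n, (1-y)^i < ∑ i ∈ Finset.range n, (1:ℝ) := by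
            apply Finset.sum_lt_sum
            · intro i _
              exact pow_le_one₀ (by linarith [hy.2]) (by linarith)
            · refine ⟨1, Finset.mem_range.mpr (by omega), ?_⟩
              rw [pow_one]
              linarith [hy.2]
          simpa using this
        · have key : StrictAntiOn (psi n 1) (Set.Icc x y) := by
            apply strictAntiOn_of_deriv_neg (convex_Icc x y)
            · intro q hq
              exact ((hpsid q (ne_of_gt (lt_of_lt_of_le hx0 hq.1))).continuousAt).continuousWithinAt
            · intro q hq
              rw [interior_Icc] at hq
              have hq0 : 0 < q := lt_trans hx0 hq.1
              rw [(hpsid q (ne_of_gt hq0)).deriv]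
              exact mul_neg_of_pos_of_neg (by positivity)
                (Dneg q hq0 (le_trans (le_of_lt hq.2) hy.2))
          exact key ⟨le_rfl, le_of_lt hxy⟩ ⟨le_of_lt hxy, le_rfl⟩ hxy
      have hltm : ∀ p ∈ Set.Icc (0:ℝ) 1, p ≠ 0 → psi n 1 p < psi n 1 0 := by
        intro p hp hne
        exact SA ⟨le_rfl, zero_le_one⟩ hp (lt_of_le_of_ne hp.1 (Ne.symm hne))
      refine ⟨0, ⟨le_of_eq hρeq, zero_le_one⟩, ?_, SA, ?_, hltm⟩
      · intro x hx y hy hxy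
        have hx1 : x = 0 := le_antisymm hx.2 hx.1
        have hy1 : y = 0 := le_antisymm hy.2 hy.1
        rw [hx1, hy1] at hxy; exact absurd hxy (lt_irrefl 0)
      · intro p hp
        rcases eq_or_ne p 0 with h | h
        · rw [h]
        · exact le_of_lt (hltm p hp h)
    · -- 2 ≤ k : main case
      have hk2' : 2 ≤ k := by omega
      have hρpos : 0 < ρ := by
        apply div_pos _ hn1R
        have : (2:ℝ) ≤ (k:ℝ) := by exact_mod_cast hk2'
        linarith
      have SMD : StrictMonoOn (Dfun n k) (Set.Icc 0 ρ) := by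
        apply strictMonoOn_of_deriv_pos (convex_Icc 0 ρ) hDcont.continuousOn
        intro x hx
        rw [interior_Icc] at hx
        rw [hderivD]
        have hx1 : x < 1 := lt_trans hx.2 hρ1
        apply mul_pos (mul_pos (mul_pos hcpos (pow_pos hx.1 _)) (pow_pos (by linarith) _))
        rw [sub_pos]
        have h2 := hx.2
        rw [hρ, lt_div_iff₀ hn1R] at h2
        linarith
      have hDρpos : 0 < Dfun n k ρ := by
        have := SMD ⟨le_rfl, hρ0⟩ ⟨hρ0, le_rfl⟩ hρpos
        rwa [hD0] at this
      obtain ⟨pstar, hpsmem, hDps⟩ : ∃ p ∈ Set.Icc ρ 1, Dfun n k p = 0 := by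
        have h := intermediate_value_Icc' (le_of_lt hρ1) hDcont.continuousOn
        have h0 : (0:ℝ) ∈ Set.Icc (Dfun n k 1) (Dfun n k ρ) := by
          rw [hD1]; exact ⟨by linarith, le_of_lt hDρpos⟩
        obtain ⟨p, hp, hp0⟩ := h h0
        exact ⟨p, hp, hp0⟩
      have hpsρ : ρ < pstar := by
        rcases eq_or_lt_of_le hpsmem.1 with h | h
        · rw [← h] at hDps; rw [hDps] at hDρpos; exact absurd hDρpos (lt_irrefl 0)
        · exact h
      have hps1 : pstar < 1 := by
        rcases eq_or_lt_of_le hpsmem.2 with h | h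
        · rw [h, hD1] at hDps; norm_num at hDps
        · exact h
      have hps0 : 0 < pstar := lt_of_le_of_lt hρ0 hpsρ
      have Dpos : ∀ q : ℝ, 0 < q → q < pstar → 0 < Dfun n k q := by
        intro q hq hqps
        rcases le_or_gt q ρ with h | h
        · have := SMD ⟨le_rfl, hρ0⟩ ⟨le_of_lt hq, h⟩ hq
          rwa [hD0] at this
        · have := SAD ⟨le_of_lt h, le_trans (le_of_lt hqps) hpsmem.2⟩ hpsmem hqps
          rwa [hDps] at this
      have Dneg : ∀ q : ℝ, pstar < q → q ≤ 1 → Dfun n k q < 0 := by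
        intro q h hq1
        have := SAD hpsmem ⟨le_trans hpsmem.1 (le_of_lt h), hq1⟩ h
        rwa [hDps] at this
      have psi0 : psi n k 0 = 0 := by simp [psi, hk2]
      have SM : StrictMonoOn (psi n k) (Set.Icc 0 pstar) := by
        intro x hx y hy hxy
        rcases eq_or_lt_of_le hx.1 with hx0 | hx0
        · rw [← hx0, psi0]
          have hy0 : 0 < y := by rw [hx0]; exact hxy
          rw [psi_eq _ _ (ne_of_gt hy0)]
          exact mul_pos (inv_pos.mpr hy0) (binTail_pos n k hkn hy0 (le_trans hy.2 (le_of_lt hps1)))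
        · have key : StrictMonoOn (psi n k) (Set.Icc x y) := by
            apply strictMonoOn_of_deriv_pos (convex_Icc x y)
            · intro q hq
              exact ((hpsid q (ne_of_gt (lt_of_lt_of_le hx0 hq.1))).continuousAt).continuousWithinAt
            · intro q hq
              rw [interior_Icc] at hq
              have hq0 : 0 < q := lt_trans hx0 hq.1
              rw [(hpsid q (ne_of_gt hq0)).deriv]
              exact mul_pos (by positivity) (Dpos q hq0 (lt_of_lt_of_le hq.2 hy.2))
          exact key ⟨le_rfl, le_of_lt hxy⟩ ⟨le_of_lt hxy, le_rfl⟩ hxy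
      have SA : StrictAntiOn (psi n k) (Set.Icc pstar 1) := by
        apply strictAntiOn_of_deriv_neg (convex_Icc pstar 1)
        · intro q hq
          exact ((hpsid q (ne_of_gt (lt_of_lt_of_le hps0 hq.1))).continuousAt).continuousWithinAt
        · intro q hq
          rw [interior_Icc] at hq
          have hq0 : 0 < q := lt_trans hps0 hq.1
          rw [(hpsid q (ne_of_gt hq0)).deriv]
          exact mul_neg_of_pos_of_neg (by positivity) (Dneg q hq.1 (le_of_lt hq.2))
      have hltm : ∀ p ∈ Set.Icc (0:ℝ) 1, p ≠ pstar → psi n k p < psi n k pstar := by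
        intro p hp hne
        rcases lt_or_gt_of_ne hne with h | h
        · exact SM ⟨hp.1, le_of_lt h⟩ ⟨le_of_lt hps0, le_rfl⟩ h
        · exact SA ⟨le_rfl, le_of_lt hps1⟩ ⟨le_of_lt h, hp.2⟩ h
      refine ⟨pstar, hpsmem, SM, SA, ?_, hltm⟩
      intro p hp
      rcases eq_or_ne p pstar with h | h
      · rw [h]
      · exact le_of_lt (hltm p hp h)
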